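/- Fix β with 1 < β < 2 and constants X_m, X_n with 0 < 2X_m < X_n, and k real with 0 < k ≤ X_n^{2−β}/8. Define g(x) = √(X_n² − x²) − √(X_m² − x²) − kβ x^{β−1} on [0, X_m). Then g(x) ≥ X_n/4 for all x ∈ [0, X_m). -/
import Mathlib


open Real

/-- For `1 < β < 2`, `0 < 2X_m < X_n` and `0 < k ≤ X_n^(2−β)/8`, the phase derivative
`g(x) = √(X_n² − x²) − √(X_m² − x²) − kβ x^(β−1)` is at least `X_n/4` on `[0, X_m)`. -/
theorem phase_derivative_lower_bound (β Xm Xn k : ℝ)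
    (hβ1 : 1 < β) (hβ2 : β < 2) (hXm : 0 < Xm) (hXn : 2 * Xm < Xn)
    (hk : 0 < k) (hk' : k ≤ Xn ^ (2 - β) / 8) :
    ∀ x ∈ Set.Ico (0:ℝ) Xm,
      Xn / 4 ≤ Real.sqrt (Xn^2 - x^2) - Real.sqrt (Xm^2 - x^2) - k * β * x ^ (β - 1) := by
  rintro x ⟨hx0, hxm⟩
  have hXn0 : 0 < Xn := by linarith
  have hxXm : x ≤ Xm := le_of_lt hxm
  have hsq : (0:ℝ) ≤ Xm^2 - x^2 := by nlinarith
  set s := Real.sqrt (Xm^2 - x^2) with hs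
  have hs0 : 0 ≤ s := Real.sqrt_nonneg _
  have hs2 : s^2 = Xm^2 - x^2 := Real.sq_sqrt hsq
  have hsXm : s ≤ Xm := by
    rw [hs, show Xm^2 - x^2 = Xm^2 - x^2 from rfl]
    calc Real.sqrt (Xm^2 - x^2) ≤ Real.sqrt (Xm^2) := Real.sqrt_le_sqrt (by nlinarith)
    _ = Xm := by rw [Real.sqrt_sq hXm.le]
  -- main sqrt inequality
  have h1 : (Xn - Xm) + s ≤ Real.sqrt (Xn^2 - x^2) := by
    rw [show (Xn - Xm) + s = Real.sqrt (((Xn - Xm) + s)^2) from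
      (Real.sqrt_sq (by nlinarith)).symm]
    apply Real.sqrt_le_sqrt
    nlinarith
  -- rpow bound
  have hβ0 : (0:ℝ) ≤ β - 1 := by linarith
  have hxXn : x ≤ Xn := by linarith
  have hr : x ^ (β - 1) ≤ Xn ^ (β - 1) := Real.rpow_le_rpow hx0 hxXn hβ0
  have hrn : (0:ℝ) ≤ x ^ (β - 1) := Real.rpow_nonneg hx0 _
  have hmul : Xn ^ (2 - β) * Xn ^ (β - 1) = Xn := by
    rw [← Real.rpow_add hXn0]
    norm_num
  have h2 : k * β * x ^ (β - 1) ≤ Xn / 4 := by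
    have hkb : k * β ≤ Xn ^ (2 - β) / 4 := by nlinarith
    have hXnr : (0:ℝ) < Xn ^ (β - 1) := Real.rpow_pos_of_pos hXn0 _
    have c1 : k * β * x ^ (β - 1) ≤ k * β * Xn ^ (β - 1) :=
      mul_le_mul_of_nonneg_left hr (by positivity)
    have c2 : k * β * Xn ^ (β - 1) ≤ Xn ^ (2 - β) / 4 * Xn ^ (β - 1) :=
      mul_le_mul_of_nonneg_right hkb hXnr.le
    have c3 : Xn ^ (2 - β) / 4 * Xn ^ (β - 1) = Xn / 4 := by
      rw [div_mul_eq_mul_div, hmul]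
    linarith
  linarith
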